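/- arXiv:2501.17364 — 2 statements merged into one kernel-verified Lean document; each statement's English description precedes it below -/
import Mathlib

section
/- If x ∈ ℝ̃_ρ and the exponential series Σ_{n=0}^∞ x^n/n! converges in the sharp topology of ℝ̃_ρ, then x is infinitesimal (|x| ≤ r for all real r > 0). In fact, if x = [x_ε] and x^n/n! → 0 sharply, then |x_ε| ≤ n!·ρ_ε^{1/n} for ε small, for all sufficiently large n ∈ ℕ. -/
open Filter Topology

namespace RC

def F : Filter ℝ := nhdsWithin 0 (Set.Ioi 0)

/-- A gauge: a net `ρ : (0,1] → (0,1]` with `ρ ε → 0` as `ε → 0⁺`. -/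
def Gauge (ρ : ℝ → ℝ) : Prop :=
  (∀ ε ∈ Set.Ioc (0:ℝ) 1, ρ ε ∈ Set.Ioc (0:ℝ) 1) ∧ Tendsto ρ F (nhds 0)

/-- ρ-moderate real nets: `x_ε = O(ρ_ε^{-N})` for some `N`. -/
def Mod (ρ x : ℝ → ℝ) : Prop :=
  ∃ N : ℕ, ∃ C : ℝ, ∀ᶠ ε in F, |x ε| ≤ C * (ρ ε)⁻¹ ^ N

/-- ρ-negligible real nets: `x_ε = O(ρ_ε^{N})` for all `N`. -/
def Ngl (ρ x : ℝ → ℝ) : Prop :=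
  ∀ N : ℕ, ∃ C : ℝ, ∀ᶠ ε in F, |x ε| ≤ C * ρ ε ^ N

def Eqv (ρ x y : ℝ → ℝ) : Prop := Ngl ρ (x - y)

/-- The order on generalized numbers, at the level of representatives. -/
def leG (ρ x y : ℝ → ℝ) : Prop :=
  ∀ x', Mod ρ x' → Eqv ρ x' x → ∃ y', Mod ρ y' ∧ Eqv ρ y' y ∧ ∀ᶠ ε in F, x' ε ≤ y' ε

/-- Invertibility in the quotient ring, at the level of representatives. -/
def InvG (ρ x : ℝ → ℝ) : Prop := ∃ y, Mod ρ y ∧ Eqv ρ (x * y) 1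

def ltG (ρ x y : ℝ → ℝ) : Prop := leG ρ x y ∧ InvG ρ (y - x)

def posInv (ρ r : ℝ → ℝ) : Prop := ltG ρ 0 r

def ModC (ρ : ℝ → ℝ) (x : ℝ → ℂ) : Prop :=
  ∃ N : ℕ, ∃ C : ℝ, ∀ᶠ ε in F, ‖x ε‖ ≤ C * (ρ ε)⁻¹ ^ N

def NglC (ρ : ℝ → ℝ) (x : ℝ → ℂ) : Prop :=
  ∀ N : ℕ, ∃ C : ℝ, ∀ᶠ ε in F, ‖x ε‖ ≤ C * ρ ε ^ N

def EqvC (ρ : ℝ → ℝ) (x y : ℝ → ℂ) : Prop := NglC ρ (x - y)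

def InvC (ρ : ℝ → ℝ) (x : ℝ → ℂ) : Prop := ∃ y, ModC ρ y ∧ EqvC ρ (x * y) 1

noncomputable def absC (x : ℝ → ℂ) : ℝ → ℝ := fun ε => ‖x ε‖

/-- Convergence of a sequence of generalized numbers in the sharp topology. -/
def SharpTendsto (ρ : ℝ → ℝ) (u : ℕ → ℝ → ℝ) (L : ℝ → ℝ) : Prop :=
  ∀ q : ℕ, ∃ M : ℕ, ∀ n ≥ M, ltG ρ (fun ε => |u n ε - L ε|) (fun ε => ρ ε ^ q)


lemma mem_Ioc_F : ∀ᶠ ε in F, ε ∈ Set.Ioc (0:ℝ) 1 := by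
  have h1 : Set.Ioi (0:ℝ) ∈ F := self_mem_nhdsWithin
  have h2 : Set.Iic (1:ℝ) ∈ F := nhdsWithin_le_nhds (Iic_mem_nhds one_pos)
  filter_upwards [h1, h2] with ε hε hε' using ⟨hε, hε'⟩

lemma rho_mem {ρ : ℝ → ℝ} (hρ : Gauge ρ) : ∀ᶠ ε in F, ρ ε ∈ Set.Ioc (0:ℝ) 1 :=
  mem_Ioc_F.mono fun ε h => hρ.1 ε h

lemma mod_add {ρ u v : ℝ → ℝ} (hρ : Gauge ρ) (hu : Mod ρ u) (hv : Mod ρ v) :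
    Mod ρ (fun ε => u ε + v ε) := by
  obtain ⟨N1, C1, h1⟩ := hu
  obtain ⟨N2, C2, h2⟩ := hv
  refine ⟨N1 + N2, |C1| + |C2|, ?_⟩
  filter_upwards [h1, h2, rho_mem hρ] with ε h1 h2 h3
  have hpos : 0 < (ρ ε)⁻¹ := inv_pos.mpr h3.1
  have hinv : 1 ≤ (ρ ε)⁻¹ := one_le_inv_iff₀.mpr ⟨h3.1, h3.2⟩
  have hp0 : (0:ℝ) ≤ (ρ ε)⁻¹ ^ N1 := by positivity
  have hp0' : (0:ℝ) ≤ (ρ ε)⁻¹ ^ N2 := by positivity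
  have hp1 : (ρ ε)⁻¹ ^ N1 ≤ (ρ ε)⁻¹ ^ (N1 + N2) := pow_le_pow_right₀ hinv (by omega)
  have hp2 : (ρ ε)⁻¹ ^ N2 ≤ (ρ ε)⁻¹ ^ (N1 + N2) := pow_le_pow_right₀ hinv (by omega)
  have e1 : |u ε| ≤ |C1| * (ρ ε)⁻¹ ^ (N1 + N2) := by
    calc |u ε| ≤ C1 * (ρ ε)⁻¹ ^ N1 := h1
      _ ≤ |C1| * (ρ ε)⁻¹ ^ N1 := by nlinarith [le_abs_self C1]
      _ ≤ |C1| * (ρ ε)⁻¹ ^ (N1 + N2) := by nlinarith [abs_nonneg C1]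
  have e2 : |v ε| ≤ |C2| * (ρ ε)⁻¹ ^ (N1 + N2) := by
    calc |v ε| ≤ C2 * (ρ ε)⁻¹ ^ N2 := h2
      _ ≤ |C2| * (ρ ε)⁻¹ ^ N2 := by nlinarith [le_abs_self C2]
      _ ≤ |C2| * (ρ ε)⁻¹ ^ (N1 + N2) := by nlinarith [abs_nonneg C2]
  calc |u ε + v ε| ≤ |u ε| + |v ε| := abs_add_le _ _
    _ ≤ (|C1| + |C2|) * (ρ ε)⁻¹ ^ (N1 + N2) := by nlinarith

lemma mod_neg {ρ u : ℝ → ℝ} (hu : Mod ρ u) : Mod ρ (fun ε => -(u ε)) := by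
  obtain ⟨N, C, h⟩ := hu
  exact ⟨N, C, h.mono fun ε hε => by simpa using hε⟩

lemma mod_abs {ρ u : ℝ → ℝ} (hu : Mod ρ u) : Mod ρ (fun ε => |u ε|) := by
  obtain ⟨N, C, h⟩ := hu
  exact ⟨N, C, h.mono fun ε hε => by simpa [abs_abs] using hε⟩

lemma mod_const {ρ : ℝ → ℝ} (c : ℝ) : Mod ρ (fun _ => c) :=
  ⟨0, |c|, Filter.Eventually.of_forall fun ε => by simp⟩

lemma mod_term {ρ x : ℝ → ℝ} (hρ : Gauge ρ) (hx : Mod ρ x) (n : ℕ) :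
    Mod ρ (fun ε => x ε ^ n / (n.factorial : ℝ)) := by
  obtain ⟨N, C, hC⟩ := hx
  refine ⟨N * n, |C| ^ n, ?_⟩
  filter_upwards [hC, rho_mem hρ] with ε h1 h2
  have hpos : 0 < (ρ ε)⁻¹ := inv_pos.mpr h2.1
  have hxb : |x ε| ≤ |C| * (ρ ε)⁻¹ ^ N := by
    have : (0:ℝ) ≤ (ρ ε)⁻¹ ^ N := by positivity
    nlinarith [le_abs_self C]
  have hfac : (1:ℝ) ≤ (n.factorial : ℝ) := by exact_mod_cast Nat.succ_le_of_lt n.factorial_pos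
  have hb : (0:ℝ) ≤ |C| * (ρ ε)⁻¹ ^ N := by positivity
  calc |x ε ^ n / (n.factorial : ℝ)| = |x ε| ^ n / (n.factorial : ℝ) := by
        rw [abs_div, abs_pow, Nat.abs_cast]
    _ ≤ |x ε| ^ n := by
        apply div_le_self (by positivity) hfac
    _ ≤ (|C| * (ρ ε)⁻¹ ^ N) ^ n := pow_le_pow_left₀ (abs_nonneg _) hxb n
    _ = |C| ^ n * (ρ ε)⁻¹ ^ (N * n) := by rw [mul_pow, ← pow_mul]

lemma mod_sum {ρ x : ℝ → ℝ} (hρ : Gauge ρ) (hx : Mod ρ x) (m : ℕ) :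
    Mod ρ (fun ε => ∑ n ∈ Finset.range m, x ε ^ n / (n.factorial : ℝ)) := by
  induction m with
  | zero => simpa using mod_const 0
  | succ m ih =>
      have := mod_add hρ ih (mod_term hρ hx m)
      simpa [Finset.sum_range_succ] using this

/-- Key extraction: a moderate net that is `ltG`-below `ρ^q` is eventually `≤ 2 ρ^q`. -/
lemma key {ρ : ℝ → ℝ} (hρ : Gauge ρ) {w : ℝ → ℝ} (hw : Mod ρ w) (q : ℕ)
    (h : ltG ρ w (fun ε => ρ ε ^ q)) : ∀ᶠ ε in F, w ε ≤ 2 * ρ ε ^ q := by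
  obtain ⟨y', hy'mod, hy'eqv, hle⟩ :=
    h.1 w hw (by intro N; exact ⟨0, Filter.Eventually.of_forall fun ε => by simp⟩)
  obtain ⟨C, hC⟩ := hy'eqv (q + 1)
  have hδ : ∀ᶠ ε in F, ρ ε < 1 / (|C| + 1) :=
    hρ.2.eventually_lt_const (by positivity)
  filter_upwards [hle, hC, hδ, rho_mem hρ] with ε h1 h2 h3 h4
  have hρpos : 0 < ρ ε := h4.1
  have hq : (0:ℝ) < ρ ε ^ q := by positivity
  have h2' : y' ε - ρ ε ^ q ≤ C * ρ ε ^ (q + 1) := by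
    have := le_trans (le_abs_self _) h2
    simpa using this
  have hCb : C * ρ ε ^ (q + 1) ≤ ρ ε ^ q := by
    have e : ρ ε ^ (q + 1) = ρ ε ^ q * ρ ε := pow_succ _ _
    have h5 : C * ρ ε ^ (q + 1) ≤ |C| * (ρ ε ^ q * ρ ε) := by
      rw [← e]; have : (0:ℝ) ≤ ρ ε ^ (q+1) := by positivity
      nlinarith [le_abs_self C]
    have h6 : |C| * ρ ε ≤ 1 := by
      have hC1 : (0:ℝ) < |C| + 1 := by positivity
      have : |C| * ρ ε ≤ |C| * (1 / (|C| + 1)) := by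
        nlinarith [abs_nonneg C, h3.le]
      calc |C| * ρ ε ≤ |C| * (1 / (|C| + 1)) := this
        _ ≤ 1 := by rw [mul_one_div, div_le_one hC1]; linarith
    nlinarith [abs_nonneg C]
  linarith

section
variable {ρ x : ℝ → ℝ}

/-- From an eventual bound `|x ε| ≤ r` we get `leG ρ |x| r`. -/
lemma leG_of_eventually (hρ : Gauge ρ) (hx : Mod ρ x) (r : ℝ)
    (h : ∀ᶠ ε in F, |x ε| ≤ r) : leG ρ (fun ε => |x ε|) fun _ => r := by
  intro x' hx'mod hx'eqv
  refine ⟨fun ε => x' ε - |x ε| + r, ?_, ?_, ?_⟩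
  · exact mod_add hρ (mod_add hρ hx'mod (mod_neg (mod_abs hx))) (mod_const r)
  · intro N
    obtain ⟨C, hC⟩ := hx'eqv N
    exact ⟨C, hC.mono fun ε hε => by
      simpa [Pi.sub_apply, sub_add_eq_sub_sub, add_sub_cancel_right] using hε⟩
  · exact h.mono fun ε hε => by dsimp only; linarith

end

/-- If the exponential series of `x` converges sharply, then `x` is infinitesimal; moreover
if `x^n/n! → 0` sharply then `|x_ε| ≤ n! ρ_ε^{1/n}` for ε small and all large `n`. -/
theorem exp_series_converges_imp_infinitesimal (ρ : ℝ → ℝ) (hρ : Gauge ρ)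
    (x : ℝ → ℝ) (hx : Mod ρ x) :
    ((∃ L, Mod ρ L ∧
        SharpTendsto ρ (fun m ε => ∑ n ∈ Finset.range m, x ε ^ n / (n.factorial : ℝ)) L) →
      ∀ r : ℝ, 0 < r → leG ρ (fun ε => |x ε|) fun _ => r) ∧
    (SharpTendsto ρ (fun n ε => x ε ^ n / (n.factorial : ℝ)) 0 →
      ∀ᶠ n : ℕ in atTop, ∀ᶠ ε in F, |x ε| ≤ (n.factorial : ℝ) * ρ ε ^ ((n : ℝ)⁻¹)) := by
  have hterm_bound : ∀ n : ℕ, 1 ≤ n →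
      (∀ᶠ ε in F, |x ε ^ n / (n.factorial : ℝ)| ≤ 4 * ρ ε) →
      ∀ r : ℝ, 0 < r → ∀ᶠ ε in F, |x ε| ≤ r := by
    intro n hn hb r hr
    have hsmall : ∀ᶠ ε in F, ρ ε < r ^ n / (4 * (n.factorial : ℝ)) :=
      hρ.2.eventually_lt_const (by positivity)
    filter_upwards [hb, hsmall] with ε h1 h2
    have hfac : (0:ℝ) < (n.factorial : ℝ) := by exact_mod_cast n.factorial_pos
    have e1 : |x ε ^ n / (n.factorial : ℝ)| = |x ε| ^ n / (n.factorial : ℝ) := by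
      rw [abs_div, abs_pow, Nat.abs_cast]
    have h3 : |x ε| ^ n ≤ 4 * (n.factorial : ℝ) * ρ ε := by
      rw [e1, div_le_iff₀ hfac] at h1; nlinarith
    have h2' : ρ ε * (4 * (n.factorial : ℝ)) < r ^ n := (lt_div_iff₀ (by positivity)).mp h2
    have h4 : |x ε| ^ n ≤ r ^ n := by nlinarith
    exact le_of_pow_le_pow_left₀ (by omega) hr.le h4
  constructor
  · rintro ⟨L, hL, hconv⟩ r hr
    obtain ⟨M, hM⟩ := hconv 1
    set n := M + 1 with hn
    have hb1 := key hρ (mod_abs (mod_add hρ (mod_sum hρ hx n) (mod_neg hL))) 1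
      (hM n (by omega))
    have hb2 := key hρ (mod_abs (mod_add hρ (mod_sum hρ hx (n+1)) (mod_neg hL))) 1
      (hM (n+1) (by omega))
    refine leG_of_eventually hρ hx r ?_
    refine hterm_bound n (by omega) ?_ r hr
    filter_upwards [hb1, hb2, rho_mem hρ] with ε h1 h2 h3
    have hS : x ε ^ n / (n.factorial : ℝ) =
        (∑ k ∈ Finset.range (n+1), x ε ^ k / (k.factorial : ℝ)) -
        (∑ k ∈ Finset.range n, x ε ^ k / (k.factorial : ℝ)) := by
      rw [Finset.sum_range_succ]; ring
    have habs : |x ε ^ n / (n.factorial : ℝ)| ≤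
        |(∑ k ∈ Finset.range (n+1), x ε ^ k / (k.factorial : ℝ)) - L ε| +
        |(∑ k ∈ Finset.range n, x ε ^ k / (k.factorial : ℝ)) - L ε| := by
      rw [hS]
      calc |_ - _| ≤ |(∑ k ∈ Finset.range (n+1), x ε ^ k / (k.factorial : ℝ)) - L ε| +
          |L ε - (∑ k ∈ Finset.range n, x ε ^ k / (k.factorial : ℝ))| := abs_sub_le _ _ _
        _ = _ := by rw [abs_sub_comm (L ε)]
    simp only [pow_one] at h1 h2
    calc |x ε ^ n / (n.factorial : ℝ)| ≤ _ + _ := habs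
      _ ≤ 2 * ρ ε + 2 * ρ ε := add_le_add (by simpa [sub_eq_add_neg] using h2) (by simpa [sub_eq_add_neg] using h1)
      _ = 4 * ρ ε := by ring
  · intro hconv
    obtain ⟨M, hM⟩ := hconv 1
    rw [Filter.eventually_atTop]
    refine ⟨max M 2, fun n hn => ?_⟩
    have hn2 : 2 ≤ n := le_trans (le_max_right _ _) hn
    have hnM : M ≤ n := le_trans (le_max_left _ _) hn
    have hwmod : Mod ρ (fun ε => |x ε ^ n / (n.factorial : ℝ) - (0:ℝ→ℝ) ε|) := by
      have := mod_abs (mod_term hρ hx n)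
      simpa using this
    have hb := key hρ hwmod 1 (hM n hnM)
    filter_upwards [hb, rho_mem hρ] with ε h1 h2
    have hρpos : 0 < ρ ε := h2.1
    have hfac : (2:ℝ) ≤ (n.factorial : ℝ) := by
      have : 2 ≤ n.factorial := Nat.self_le_factorial 2 |>.trans (Nat.factorial_le hn2)
      exact_mod_cast this
    have hfacpos : (0:ℝ) < (n.factorial : ℝ) := by linarith
    have e1 : |x ε ^ n / (n.factorial : ℝ) - (0:ℝ→ℝ) ε| = |x ε| ^ n / (n.factorial : ℝ) := by
      simp [abs_div, abs_pow, Nat.abs_cast]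
    have h3 : |x ε| ^ n ≤ 2 * (n.factorial : ℝ) * ρ ε := by
      rw [e1, div_le_iff₀ hfacpos] at h1
      simp only [pow_one] at h1; nlinarith
    have hfn : 2 * (n.factorial : ℝ) ≤ (n.factorial : ℝ) ^ n := by
      calc 2 * (n.factorial : ℝ) ≤ (n.factorial : ℝ) * (n.factorial : ℝ) := by nlinarith
        _ = (n.factorial : ℝ) ^ 2 := by ring
        _ ≤ (n.factorial : ℝ) ^ n := pow_le_pow_right₀ (by linarith) hn2
    have hrhs : ((n.factorial : ℝ) * ρ ε ^ ((n:ℝ)⁻¹)) ^ n = (n.factorial : ℝ) ^ n * ρ ε := by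
      rw [mul_pow, Real.rpow_inv_natCast_pow hρpos.le (by omega)]
    have h4 : |x ε| ^ n ≤ ((n.factorial : ℝ) * ρ ε ^ ((n:ℝ)⁻¹)) ^ n := by
      rw [hrhs]; nlinarith
    exact le_of_pow_le_pow_left₀ (by omega) (by positivity) h4

end RC
end

section
/- The only linear map D : ℝ̃_ρ² → ℝ̃_ρ² which is a weak little-oh of h (i.e. D(h) = h·r(h) for some r with r(h) → 0 in the sharp topology as h → 0) is the zero map. Consequently, the ℝ̃_ρ-differential of a map at a point, when it exists as a linear basic function, is unique. -/
open Filter Topology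

namespace RC

abbrev V2 := EuclideanSpace ℝ (Fin 2)

def ModV2 (ρ : ℝ → ℝ) (x : ℝ → V2) : Prop :=
  ∃ N : ℕ, ∃ C : ℝ, ∀ᶠ ε in F, ‖x ε‖ ≤ C * (ρ ε)⁻¹ ^ N

def NglV2 (ρ : ℝ → ℝ) (x : ℝ → V2) : Prop :=
  ∀ N : ℕ, ∃ C : ℝ, ∀ᶠ ε in F, ‖x ε‖ ≤ C * ρ ε ^ N

def EqvV2 (ρ : ℝ → ℝ) (x y : ℝ → V2) : Prop := NglV2 ρ (x - y)

/-- `D` represents an `ℝ̃_ρ`-linear map `ℝ̃_ρ² → ℝ̃_ρ²`. -/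
def IsLinearNet (ρ : ℝ → ℝ) (D : (ℝ → V2) → ℝ → V2) : Prop :=
  (∀ x y, ModV2 ρ x → ModV2 ρ y → EqvV2 ρ x y → EqvV2 ρ (D x) (D y)) ∧
  (∀ x, ModV2 ρ x → ModV2 ρ (D x)) ∧
  (∀ x y, ModV2 ρ x → ModV2 ρ y → EqvV2 ρ (D (x + y)) (D x + D y)) ∧
  (∀ (α : ℝ → ℝ) (x), Mod ρ α → ModV2 ρ x →
    EqvV2 ρ (D fun ε => α ε • x ε) (fun ε => α ε • D x ε))

/-- `D(h) = h · r(h)` with `r(h) → 0` sharply as `h → 0`: a weak little-oh of `h`. -/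
def IsWeakOhNet (ρ : ℝ → ℝ) (D : (ℝ → V2) → ℝ → V2) : Prop :=
  ∃ r : (ℝ → V2) → ℝ → ℝ,
    (∀ h, ModV2 ρ h → EqvV2 ρ (D h) (fun ε => r h ε • h ε)) ∧
    ∀ q : ℕ, ∃ H : ℝ → ℝ, Mod ρ H ∧ posInv ρ H ∧
      ∀ h, ModV2 ρ h → InvG ρ (fun ε => ‖h ε‖) → ltG ρ (fun ε => ‖h ε‖) H →
        ltG ρ (fun ε => |r h ε|) (fun ε => ρ ε ^ q)

section Helpers

variable {ρ : ℝ → ℝ}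

lemma gauge_mem (hρ : Gauge ρ) : ∀ᶠ ε in F, 0 < ρ ε ∧ ρ ε ≤ 1 := by
  have h1 : ∀ᶠ ε in F, ε ∈ Set.Ioi (0:ℝ) := eventually_mem_nhdsWithin
  have h2 : ∀ᶠ ε in F, ε < 1 :=
    nhdsWithin_le_nhds (tendsto_id.eventually_lt_const one_pos)
  filter_upwards [h1, h2] with ε he1 he2
  exact ⟨(hρ.1 ε ⟨he1, he2.le⟩).1, (hρ.1 ε ⟨he1, he2.le⟩).2⟩
lemma gauge_lt (hρ : Gauge ρ) {δ : ℝ} (hδ : 0 < δ) : ∀ᶠ ε in F, ρ ε < δ :=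
  hρ.2.eventually_lt_const hδ
lemma eqv_refl (hρ : Gauge ρ) (a : ℝ → ℝ) : Eqv ρ a a := fun N =>
  ⟨1, (gauge_mem hρ).mono fun ε hε => by
    simp only [Pi.sub_apply, sub_self, abs_zero, one_mul]
    exact pow_nonneg hε.1.le N⟩
lemma invG_lower (hρ : Gauge ρ) {x : ℝ → ℝ} (h : InvG ρ x) :
    ∃ m : ℕ, ∃ c : ℝ, 0 < c ∧ ∀ᶠ ε in F, c * ρ ε ^ m ≤ |x ε| := by
  obtain ⟨y, ⟨N, C, hy⟩, hxy⟩ := h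
  obtain ⟨C₁, h1⟩ := hxy 1
  set M := max C 1 with hM
  have hMpos : (0:ℝ) < M := lt_of_lt_of_le one_pos (le_max_right _ _)
  refine ⟨N, 1/(2*M), by positivity, ?_⟩
  have hsmall : ∀ᶠ ε in F, ρ ε < 1/(2*(max C₁ 1)) := gauge_lt hρ (by positivity)
  filter_upwards [hy, h1, hsmall, gauge_mem hρ] with ε hy1 h11 hs ⟨hp, hl1⟩
  have hxyval : |x ε * y ε - 1| ≤ C₁ * ρ ε := by simpa using h11
  have hC1 : C₁ * ρ ε ≤ 1/2 := by
    have h2 : C₁ * ρ ε ≤ (max C₁ 1) * ρ ε :=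
      mul_le_mul_of_nonneg_right (le_max_left _ _) hp.le
    have h3 : (max C₁ 1) * ρ ε ≤ 1/2 := by
      have hm1 : (0:ℝ) < max C₁ 1 := lt_of_lt_of_le one_pos (le_max_right _ _)
      calc (max C₁ 1) * ρ ε ≤ (max C₁ 1) * (1/(2*(max C₁ 1))) :=
            mul_le_mul_of_nonneg_left hs.le hm1.le
        _ = 1/2 := by field_simp
    linarith
  have habs : 1/2 ≤ |x ε| * |y ε| := by
    have := abs_sub_abs_le_abs_sub (1 : ℝ) (x ε * y ε)
    rw [abs_sub_comm] at this
    have h4 : 1 - |x ε * y ε| ≤ 1/2 := by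
      simp only [abs_one] at this; linarith
    rw [← abs_mul]; linarith
  have hyb : |y ε| ≤ M * (ρ ε)⁻¹ ^ N :=
    le_trans hy1 (mul_le_mul_of_nonneg_right (le_max_left _ _) (by positivity))
  -- conclude
  have hPpos : (0:ℝ) < ρ ε ^ N := pow_pos hp N
  have hinv : ρ ε ^ N * (ρ ε)⁻¹ ^ N = 1 := by
    rw [← mul_pow, mul_inv_cancel₀ hp.ne', one_pow]
  have hBP : |y ε| * ρ ε ^ N ≤ M := by
    calc |y ε| * ρ ε ^ N ≤ (M * (ρ ε)⁻¹ ^ N) * ρ ε ^ N :=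
          mul_le_mul_of_nonneg_right hyb hPpos.le
      _ = M := by rw [mul_assoc, mul_comm ((ρ ε)⁻¹ ^ N), hinv, mul_one]
  have hxnn : (0:ℝ) ≤ |x ε| := abs_nonneg _
  rw [div_mul_eq_mul_div, one_mul, div_le_iff₀ (by positivity)]
  calc ρ ε ^ N = 2 * (1/2) * ρ ε ^ N := by ring
    _ ≤ 2 * (|x ε| * |y ε|) * ρ ε ^ N := by nlinarith
    _ = |x ε| * (2 * (|y ε| * ρ ε ^ N)) := by ring
    _ ≤ |x ε| * (2 * M) := by nlinarith
lemma posInv_lower (hρ : Gauge ρ) {H : ℝ → ℝ} (h : posInv ρ H) :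
    ∃ m : ℕ, ∃ c : ℝ, 0 < c ∧ ∀ᶠ ε in F, c * ρ ε ^ m ≤ H ε := by
  obtain ⟨hle, hinv⟩ := h
  have hinv' : InvG ρ H := by rwa [sub_zero] at hinv
  obtain ⟨m, c, hc, hev⟩ := invG_lower hρ hinv'
  have hmod0 : Mod ρ (0 : ℝ → ℝ) := ⟨0, 1, Eventually.of_forall fun ε => by simp⟩
  obtain ⟨y', hy'mod, hy'eqv, hy'le⟩ := hle 0 hmod0 (eqv_refl hρ 0)
  obtain ⟨C₂, h2⟩ := hy'eqv (m+1)
  refine ⟨m, c, hc, ?_⟩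
  have hsmall : ∀ᶠ ε in F, ρ ε < c / (max C₂ 1) :=
    gauge_lt hρ (by positivity)
  filter_upwards [hev, h2, hy'le, hsmall, gauge_mem hρ] with ε h1 h2' h3 h4 hpe
  obtain ⟨hp, hl1⟩ := hpe
  rcases le_or_gt 0 (H ε) with hH | hH
  · rwa [abs_of_nonneg hH] at h1
  · exfalso
    rw [abs_of_neg hH] at h1
    have h5 : |y' ε - H ε| ≤ C₂ * ρ ε ^ (m+1) := by simpa using h2'
    have h6 : -(C₂ * ρ ε ^ (m+1)) ≤ H ε := by
      have := abs_le.mp h5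
      have h3' : (0:ℝ) ≤ y' ε := by simpa using h3
      linarith [this.2]
    have h7 : C₂ * ρ ε ^ (m+1) < c * ρ ε ^ m := by
      have hm1 : (0:ℝ) < max C₂ 1 := lt_of_lt_of_le one_pos (le_max_right _ _)
      have hpm : (0:ℝ) < ρ ε ^ m := pow_pos hp m
      calc C₂ * ρ ε ^ (m+1) ≤ (max C₂ 1) * ρ ε ^ (m+1) := by
            exact mul_le_mul_of_nonneg_right (le_max_left _ _) (by positivity)
        _ = ((max C₂ 1) * ρ ε) * ρ ε ^ m := by ring
        _ < ((max C₂ 1) * (c / max C₂ 1)) * ρ ε ^ m := by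
            apply mul_lt_mul_of_pos_right _ hpm
            exact mul_lt_mul_of_pos_left h4 hm1
        _ = c * ρ ε ^ m := by field_simp
    linarith
lemma invG_of_lower (hρ : Gauge ρ) {x : ℝ → ℝ} {m : ℕ} {c : ℝ} (hc : 0 < c)
    (hx : ∀ᶠ ε in F, c * ρ ε ^ m ≤ |x ε|) : InvG ρ x := by
  refine ⟨fun ε => (x ε)⁻¹, ⟨m, c⁻¹, ?_⟩, ?_⟩
  · filter_upwards [hx, gauge_mem hρ] with ε h1 hpe
    obtain ⟨hp, hl1⟩ := hpe
    have hpm : (0:ℝ) < ρ ε ^ m := pow_pos hp m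
    have hxpos : 0 < |x ε| := lt_of_lt_of_le (by positivity) h1
    calc |(x ε)⁻¹| = |x ε|⁻¹ := abs_inv _
      _ ≤ (c * ρ ε ^ m)⁻¹ := by
          apply inv_anti₀ (by positivity) h1
      _ = c⁻¹ * (ρ ε)⁻¹ ^ m := by rw [mul_inv, inv_pow]
  · intro N
    refine ⟨1, ?_⟩
    filter_upwards [hx, gauge_mem hρ] with ε h1 hpe
    have hxne : x ε ≠ 0 := by
      intro h0
      rw [h0, abs_zero] at h1
      nlinarith [pow_pos hpe.1 m]
    simp only [Pi.sub_apply, Pi.mul_apply, Pi.one_apply]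
    rw [mul_inv_cancel₀ hxne, sub_self, abs_zero, one_mul]
    exact pow_nonneg hpe.1.le N
lemma ltG_of (hρ : Gauge ρ) {a b : ℝ → ℝ} {m : ℕ} {c : ℝ} (hc : 0 < c)
    (hbmod : Mod ρ b)
    (hab : ∀ᶠ ε in F, 0 ≤ a ε ∧ a ε ≤ (c/2) * ρ ε ^ (m+1))
    (hb : ∀ᶠ ε in F, c * ρ ε ^ m ≤ b ε) : ltG ρ a b := by
  constructor
  · intro x' hx'mod hx'eqv
    refine ⟨b, hbmod, eqv_refl hρ b, ?_⟩
    obtain ⟨C, hC⟩ := hx'eqv (m+1)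
    set K := c/2 + max C 0 with hK
    have hKpos : (0:ℝ) < K := by positivity
    have hsmall : ∀ᶠ ε in F, ρ ε < c / K := gauge_lt hρ (by positivity)
    filter_upwards [hab, hb, hC, hsmall, gauge_mem hρ] with ε h1 h2 h3 h4 hpe
    obtain ⟨hp, hl1⟩ := hpe
    have h5 : |x' ε - a ε| ≤ C * ρ ε ^ (m+1) := by simpa using h3
    have hpm1 : (0:ℝ) ≤ ρ ε ^ (m+1) := by positivity
    have h6 : x' ε ≤ K * ρ ε ^ (m+1) := by
      have := (abs_le.mp h5).2
      have hC' : C * ρ ε ^ (m+1) ≤ max C 0 * ρ ε ^ (m+1) :=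
        mul_le_mul_of_nonneg_right (le_max_left _ _) hpm1
      rw [hK]; nlinarith [h1.2]
    have h7 : K * ρ ε ^ (m+1) ≤ c * ρ ε ^ m := by
      have hpm : (0:ℝ) < ρ ε ^ m := pow_pos hp m
      calc K * ρ ε ^ (m+1) = (K * ρ ε) * ρ ε ^ m := by ring
        _ ≤ (K * (c/K)) * ρ ε ^ m := by
            apply mul_le_mul_of_nonneg_right _ hpm.le
            exact mul_le_mul_of_nonneg_left h4.le hKpos.le
        _ = c * ρ ε ^ m := by field_simp
    linarith
  · apply invG_of_lower hρ (c := c/2) (m := m) (by positivity)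
    filter_upwards [hab, hb, gauge_mem hρ] with ε h1 h2 hpe
    obtain ⟨hp, hl1⟩ := hpe
    have hpm : (0:ℝ) < ρ ε ^ m := pow_pos hp m
    have hmono : ρ ε ^ (m+1) ≤ ρ ε ^ m := by
      calc ρ ε ^ (m+1) = ρ ε ^ m * ρ ε := by ring
        _ ≤ ρ ε ^ m * 1 := mul_le_mul_of_nonneg_left hl1 hpm.le
        _ = ρ ε ^ m := mul_one _
    have : c/2 * ρ ε ^ m ≤ b ε - a ε := by nlinarith [h1.2]
    calc c/2 * ρ ε ^ m ≤ b ε - a ε := this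
      _ = (b - a) ε := rfl
      _ ≤ |(b - a) ε| := le_abs_self _
lemma ltG_upper (hρ : Gauge ρ) {a b : ℝ → ℝ} (h : ltG ρ a b) (ha : Mod ρ a) (N : ℕ) :
    ∃ C : ℝ, ∀ᶠ ε in F, a ε ≤ b ε + C * ρ ε ^ N := by
  obtain ⟨y', hy'm, hy'e, hy'le⟩ := h.1 a ha (eqv_refl hρ a)
  obtain ⟨C, hC⟩ := hy'e N
  refine ⟨C, ?_⟩
  filter_upwards [hy'le, hC] with ε h1 h2
  have h3 : |y' ε - b ε| ≤ C * ρ ε ^ N := by simpa using h2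
  have := (abs_le.mp h3).2
  linarith
lemma coord_le_norm (v : V2) (i : Fin 2) : |v i| ≤ ‖v‖ := by
  rw [EuclideanSpace.norm_eq, ← Real.sqrt_sq_eq_abs]
  apply Real.sqrt_le_sqrt
  have := Finset.single_le_sum (f := fun j => ‖v j‖ ^ 2)
    (fun j _ => sq_nonneg _) (Finset.mem_univ i)
  simpa [sq_abs] using this
lemma nglV2_dom {x y : ℝ → V2} (h : ∀ᶠ ε in F, ‖x ε‖ ≤ ‖y ε‖) (hy : NglV2 ρ y) :
    NglV2 ρ x := fun N => by
  obtain ⟨C, hC⟩ := hy N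
  exact ⟨C, by filter_upwards [h, hC] with ε h1 h2; linarith⟩
lemma nglV2_add {x y : ℝ → V2} (hx : NglV2 ρ x) (hy : NglV2 ρ y) :
    NglV2 ρ (x + y) := fun N => by
  obtain ⟨C, hC⟩ := hx N
  obtain ⟨C', hC'⟩ := hy N
  refine ⟨C + C', ?_⟩
  filter_upwards [hC, hC'] with ε h1 h2
  calc ‖(x + y) ε‖ ≤ ‖x ε‖ + ‖y ε‖ := norm_add_le _ _
    _ ≤ C * ρ ε ^ N + C' * ρ ε ^ N := add_le_add h1 h2
    _ = (C + C') * ρ ε ^ N := by ring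
lemma nglV2_neg {x : ℝ → V2} (hx : NglV2 ρ x) : NglV2 ρ (-x) := fun N => by
  obtain ⟨C, hC⟩ := hx N
  exact ⟨C, hC.mono fun ε h => by simpa using h⟩
lemma nglV2_sub {x y : ℝ → V2} (hx : NglV2 ρ x) (hy : NglV2 ρ y) :
    NglV2 ρ (x - y) := by
  rw [sub_eq_add_neg]; exact nglV2_add hx (nglV2_neg hy)

/-- If `u - v` is negligible and `v` is negligible then `u` is negligible. -/
lemma nglV2_close {u v : ℝ → V2} (h1 : NglV2 ρ (u - v)) (h2 : NglV2 ρ v) :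
    NglV2 ρ u := fun N => by
  obtain ⟨C, hC⟩ := h1 N
  obtain ⟨C', hC'⟩ := h2 N
  refine ⟨C + C', ?_⟩
  filter_upwards [hC, hC'] with ε ha hb
  have : ‖u ε‖ ≤ ‖(u - v) ε‖ + ‖v ε‖ := by
    simpa [Pi.sub_apply] using norm_add_le (u ε - v ε) (v ε)
  linarith

/-- Moderate scalar times negligible vector net is negligible. -/
lemma nglV2_smul_mod (hρ : Gauge ρ) {α : ℝ → ℝ} {z : ℝ → V2}
    (hα : Mod ρ α) (hz : NglV2 ρ z) : NglV2 ρ (fun ε => α ε • z ε) := by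
  obtain ⟨N₀, C₀, h0⟩ := hα
  intro N
  obtain ⟨C, hC⟩ := hz (N + N₀)
  refine ⟨max C₀ 0 * max C 0, ?_⟩
  filter_upwards [h0, hC, gauge_mem hρ] with ε h1 h2 hpe
  obtain ⟨hp, hl1⟩ := hpe
  have hpN : (0:ℝ) < ρ ε ^ N := pow_pos hp N
  have hinv : (ρ ε)⁻¹ ^ N₀ * ρ ε ^ N₀ = 1 := by
    rw [← mul_pow, inv_mul_cancel₀ hp.ne', one_pow]
  calc ‖α ε • z ε‖ = |α ε| * ‖z ε‖ := norm_smul _ _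
    _ ≤ (max C₀ 0 * (ρ ε)⁻¹ ^ N₀) * (max C 0 * ρ ε ^ (N + N₀)) := by
        apply mul_le_mul
        · exact le_trans h1 (mul_le_mul_of_nonneg_right (le_max_left _ _) (by positivity))
        · exact le_trans h2 (mul_le_mul_of_nonneg_right (le_max_left _ _) (by positivity))
        · exact norm_nonneg _
        · positivity
    _ = (max C₀ 0 * max C 0) * ρ ε ^ N * ((ρ ε)⁻¹ ^ N₀ * ρ ε ^ N₀) := by ring
    _ = (max C₀ 0 * max C 0) * ρ ε ^ N := by rw [hinv, mul_one]
lemma key_s17 (hρ : Gauge ρ) (D : (ℝ → V2) → ℝ → V2) (hD : IsLinearNet ρ D)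
    {r : (ℝ → V2) → ℝ → ℝ}
    (hr1 : ∀ h, ModV2 ρ h → EqvV2 ρ (D h) (fun ε => r h ε • h ε))
    (hr2 : ∀ q : ℕ, ∃ H : ℝ → ℝ, Mod ρ H ∧ posInv ρ H ∧
      ∀ h, ModV2 ρ h → InvG ρ (fun ε => ‖h ε‖) → ltG ρ (fun ε => ‖h ε‖) H →
        ltG ρ (fun ε => |r h ε|) (fun ε => ρ ε ^ q))
    (e : V2) (he : ‖e‖ = 1) :
    NglV2 ρ (D (fun _ => e)) := by
  set E : ℝ → V2 := fun _ => e with hE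
  have hEmod : ModV2 ρ E := ⟨0, 1, Eventually.of_forall fun ε => by simp [hE, he]⟩
  intro N
  obtain ⟨H, hHmod, hHpos, hHprop⟩ := hr2 N
  obtain ⟨m, c, hc, hHlow⟩ := posInv_lower hρ hHpos
  set t : ℝ → ℝ := fun ε => (c/2) * ρ ε ^ (m+1) with ht
  set h : ℝ → V2 := fun ε => t ε • E ε with hh
  have htmod : Mod ρ t := by
    refine ⟨0, c/2, ?_⟩
    filter_upwards [gauge_mem hρ] with ε ⟨hp, hl1⟩
    have hle1 : ρ ε ^ (m+1) ≤ 1 := pow_le_one₀ hp.le hl1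
    have htv : t ε = (c/2) * ρ ε ^ (m+1) := rfl
    rw [htv, abs_of_nonneg (by positivity)]
    simp only [pow_zero, mul_one]
    nlinarith
  have hnorm : ∀ᶠ ε in F, ‖h ε‖ = t ε ∧ 0 < t ε := by
    filter_upwards [gauge_mem hρ] with ε ⟨hp, hl1⟩
    have htp : 0 < t ε := by
      have htv : t ε = (c/2) * ρ ε ^ (m+1) := rfl
      rw [htv]; positivity
    refine ⟨?_, htp⟩
    have hhv : h ε = t ε • e := rfl
    rw [hhv, norm_smul, he, mul_one, Real.norm_eq_abs, abs_of_pos htp]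
  have hhmod : ModV2 ρ h := by
    obtain ⟨N₀, C₀, hb⟩ := htmod
    refine ⟨N₀, C₀, ?_⟩
    filter_upwards [hb, hnorm] with ε h1 h2
    rw [h2.1]
    exact le_trans (le_abs_self _) h1
  have hinvnorm : InvG ρ (fun ε => ‖h ε‖) := by
    apply invG_of_lower hρ (c := c/2) (m := m+1) (by positivity)
    filter_upwards [hnorm] with ε h1
    rw [abs_of_nonneg (norm_nonneg _), h1.1]
  have hlt : ltG ρ (fun ε => ‖h ε‖) H := by
    apply ltG_of hρ hc hHmod _ hHlow
    filter_upwards [hnorm] with ε h1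
    exact ⟨norm_nonneg _, le_of_eq h1.1⟩
  have hrlt := hHprop h hhmod hinvnorm hlt
  have hDh1 : NglV2 ρ (D h - fun ε => r h ε • h ε) := hr1 h hhmod
  have hDh2 : NglV2 ρ (D h - fun ε => t ε • D E ε) := hD.2.2.2 t E htmod hEmod
  have hmid : NglV2 ρ ((fun ε => t ε • D E ε) - fun ε => r h ε • h ε) := by
    have h0 := nglV2_sub hDh1 hDh2
    have heq : (D h - fun ε => r h ε • h ε) - (D h - fun ε => t ε • D E ε)
        = (fun ε => t ε • D E ε) - fun ε => r h ε • h ε := by abel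
    rwa [heq] at h0
  have hmid' : NglV2 ρ (fun ε => t ε • (D E ε - r h ε • e)) := by
    apply nglV2_dom _ hmid
    apply Eventually.of_forall
    intro ε
    apply le_of_eq
    congr 1
    show t ε • (D E ε - r h ε • e) = t ε • D E ε - r h ε • (t ε • E ε)
    have : E ε = e := rfl
    rw [this, smul_sub, smul_smul, smul_smul, mul_comm]
  have hdiv : ∀ N' : ℕ, ∃ C : ℝ, ∀ᶠ ε in F, ‖D E ε - r h ε • e‖ ≤ C * ρ ε ^ N' := by
    intro N'
    obtain ⟨C, hC⟩ := hmid' (N' + (m+1))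
    refine ⟨2/c * max C 0, ?_⟩
    filter_upwards [hC, gauge_mem hρ] with ε h1 ⟨hp, hl1⟩
    have hpm : (0:ℝ) < ρ ε ^ (m+1) := pow_pos hp _
    have h2 : ‖t ε • (D E ε - r h ε • e)‖
        = ((c/2) * ρ ε ^ (m+1)) * ‖D E ε - r h ε • e‖ := by
      rw [norm_smul, Real.norm_eq_abs]
      have htv : t ε = (c/2) * ρ ε ^ (m+1) := rfl
      rw [htv, abs_of_nonneg (by positivity)]
    have h3 : ((c/2) * ‖D E ε - r h ε • e‖) * ρ ε ^ (m+1)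
        ≤ (max C 0 * ρ ε ^ N') * ρ ε ^ (m+1) := by
      have hb : ((c/2) * ρ ε ^ (m+1)) * ‖D E ε - r h ε • e‖ ≤ C * ρ ε ^ (N' + (m+1)) := by
        rw [← h2]; exact h1
      have hb2 : C * ρ ε ^ (N' + (m+1)) ≤ (max C 0 * ρ ε ^ N') * ρ ε ^ (m+1) := by
        have : C * ρ ε ^ (N' + (m+1)) ≤ max C 0 * ρ ε ^ (N' + (m+1)) :=
          mul_le_mul_of_nonneg_right (le_max_left _ _) (by positivity)
        calc C * ρ ε ^ (N' + (m+1)) ≤ max C 0 * ρ ε ^ (N' + (m+1)) := this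
          _ = (max C 0 * ρ ε ^ N') * ρ ε ^ (m+1) := by rw [pow_add]; ring
      calc ((c/2) * ‖D E ε - r h ε • e‖) * ρ ε ^ (m+1)
          = ((c/2) * ρ ε ^ (m+1)) * ‖D E ε - r h ε • e‖ := by ring
        _ ≤ C * ρ ε ^ (N' + (m+1)) := hb
        _ ≤ (max C 0 * ρ ε ^ N') * ρ ε ^ (m+1) := hb2
    have h4 := le_of_mul_le_mul_right h3 hpm
    have hcc : 2/c * (c/2) = 1 := by field_simp
    calc ‖D E ε - r h ε • e‖ = (2/c * (c/2)) * ‖D E ε - r h ε • e‖ := by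
          rw [hcc, one_mul]
      _ = 2/c * ((c/2) * ‖D E ε - r h ε • e‖) := by ring
      _ ≤ 2/c * (max C 0 * ρ ε ^ N') := by
          apply mul_le_mul_of_nonneg_left h4 (by positivity)
      _ = 2/c * max C 0 * ρ ε ^ N' := by ring
  -- |r h| is moderate
  obtain ⟨C₀, hC₀⟩ := hdiv 0
  obtain ⟨N_D, C_D, hDE⟩ := hD.2.1 E hEmod
  have hrmod : Mod ρ (fun ε => |r h ε|) := by
    refine ⟨N_D, max C_D 0 + max C₀ 0, ?_⟩
    filter_upwards [hC₀, hDE, gauge_mem hρ] with ε h1 h2 ⟨hp, hl1⟩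
    have hinv1 : (1:ℝ) ≤ (ρ ε)⁻¹ ^ N_D := by
      apply one_le_pow₀
      rw [le_inv_comm₀ one_pos hp]
      simpa using hl1
    have hre : |r h ε| = ‖r h ε • e‖ := by
      rw [norm_smul, he, mul_one, Real.norm_eq_abs]
    have hb : |r h ε| ≤ ‖D E ε‖ + ‖D E ε - r h ε • e‖ := by
      rw [hre]
      calc ‖r h ε • e‖ = ‖D E ε - (D E ε - r h ε • e)‖ := by congr 1; abel
        _ ≤ ‖D E ε‖ + ‖D E ε - r h ε • e‖ := norm_sub_le _ _
    have h1' : ‖D E ε - r h ε • e‖ ≤ max C₀ 0 := by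
      calc ‖D E ε - r h ε • e‖ ≤ C₀ * ρ ε ^ 0 := h1
        _ = C₀ := by simp
        _ ≤ max C₀ 0 := le_max_left _ _
    rw [abs_abs]
    calc |r h ε| ≤ ‖D E ε‖ + max C₀ 0 := by linarith
      _ ≤ C_D * (ρ ε)⁻¹ ^ N_D + max C₀ 0 * (ρ ε)⁻¹ ^ N_D := by
          have hCD : C_D * (ρ ε)⁻¹ ^ N_D ≥ ‖D E ε‖ := h2
          have : max C₀ 0 ≤ max C₀ 0 * (ρ ε)⁻¹ ^ N_D := by
            nlinarith [le_max_right C₀ 0]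
          linarith
      _ ≤ (max C_D 0 + max C₀ 0) * (ρ ε)⁻¹ ^ N_D := by
          have : C_D * (ρ ε)⁻¹ ^ N_D ≤ max C_D 0 * (ρ ε)⁻¹ ^ N_D :=
            mul_le_mul_of_nonneg_right (le_max_left _ _) (by positivity)
          nlinarith
  obtain ⟨C₁, hC₁⟩ := ltG_upper hρ hrlt hrmod N
  obtain ⟨C₂, hC₂⟩ := hdiv N
  refine ⟨C₂ + 1 + max C₁ 0, ?_⟩
  filter_upwards [hC₁, hC₂, gauge_mem hρ] with ε h1 h2 ⟨hp, hl1⟩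
  have hpN : (0:ℝ) ≤ ρ ε ^ N := by positivity
  have hre : |r h ε| = ‖r h ε • e‖ := by
    rw [norm_smul, he, mul_one, Real.norm_eq_abs]
  have hbnd : ‖D E ε‖ ≤ ‖D E ε - r h ε • e‖ + |r h ε| := by
    rw [hre]
    calc ‖D E ε‖ = ‖(D E ε - r h ε • e) + r h ε • e‖ := by congr 1; abel
      _ ≤ ‖D E ε - r h ε • e‖ + ‖r h ε • e‖ := norm_add_le _ _
  have h1' : |r h ε| ≤ (1 + max C₁ 0) * ρ ε ^ N := by
    have : C₁ * ρ ε ^ N ≤ max C₁ 0 * ρ ε ^ N :=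
      mul_le_mul_of_nonneg_right (le_max_left _ _) hpN
    nlinarith
  calc ‖D E ε‖ ≤ ‖D E ε - r h ε • e‖ + |r h ε| := hbnd
    _ ≤ C₂ * ρ ε ^ N + (1 + max C₁ 0) * ρ ε ^ N := add_le_add h2 h1'
    _ = (C₂ + 1 + max C₁ 0) * ρ ε ^ N := by ring
lemma decomp (v : V2) :
    v = v 0 • EuclideanSpace.single (0 : Fin 2) (1:ℝ)
      + v 1 • EuclideanSpace.single (1 : Fin 2) (1:ℝ) := by
  ext i; fin_cases i <;> simp [EuclideanSpace.single_apply]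
lemma D_zero (hρ : Gauge ρ) (D : (ℝ → V2) → ℝ → V2)
    (hD : IsLinearNet ρ D) (hOh : IsWeakOhNet ρ D) :
    ∀ h, ModV2 ρ h → EqvV2 ρ (D h) 0 := by
  obtain ⟨r, hr1, hr2⟩ := hOh
  have hn0 : NglV2 ρ (D fun _ => EuclideanSpace.single (0 : Fin 2) (1:ℝ)) :=
    key_s17 hρ D hD hr1 hr2 _ (by rw [EuclideanSpace.norm_single]; norm_num)
  have hn1 : NglV2 ρ (D fun _ => EuclideanSpace.single (1 : Fin 2) (1:ℝ)) :=
    key_s17 hρ D hD hr1 hr2 _ (by rw [EuclideanSpace.norm_single]; norm_num)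
  have hE0mod : ModV2 ρ (fun _ => EuclideanSpace.single (0 : Fin 2) (1:ℝ)) :=
    ⟨0, 1, Eventually.of_forall fun ε => by
      simp [EuclideanSpace.norm_single]⟩
  have hE1mod : ModV2 ρ (fun _ => EuclideanSpace.single (1 : Fin 2) (1:ℝ)) :=
    ⟨0, 1, Eventually.of_forall fun ε => by
      simp [EuclideanSpace.norm_single]⟩
  intro h hh
  obtain ⟨Nh, Ch, hhb⟩ := hh
  have hαmod : Mod ρ (fun ε => h ε 0) :=
    ⟨Nh, Ch, hhb.mono fun ε h1 => le_trans (by simpa using coord_le_norm (h ε) 0) h1⟩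
  have hβmod : Mod ρ (fun ε => h ε 1) :=
    ⟨Nh, Ch, hhb.mono fun ε h1 => le_trans (by simpa using coord_le_norm (h ε) 1) h1⟩
  set x : ℝ → V2 := fun ε => h ε 0 • EuclideanSpace.single (0 : Fin 2) (1:ℝ) with hxdef
  set y : ℝ → V2 := fun ε => h ε 1 • EuclideanSpace.single (1 : Fin 2) (1:ℝ) with hydef
  have hxmod : ModV2 ρ x := by
    refine ⟨Nh, Ch, hhb.mono fun ε h1 => ?_⟩
    have hn : ‖x ε‖ = |h ε 0| := by
      show ‖h ε 0 • EuclideanSpace.single (0 : Fin 2) (1:ℝ)‖ = _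
      rw [norm_smul, EuclideanSpace.norm_single, norm_one, mul_one, Real.norm_eq_abs]
    rw [hn]
    exact le_trans (coord_le_norm (h ε) 0) h1
  have hymod : ModV2 ρ y := by
    refine ⟨Nh, Ch, hhb.mono fun ε h1 => ?_⟩
    have hn : ‖y ε‖ = |h ε 1| := by
      show ‖h ε 1 • EuclideanSpace.single (1 : Fin 2) (1:ℝ)‖ = _
      rw [norm_smul, EuclideanSpace.norm_single, norm_one, mul_one, Real.norm_eq_abs]
    rw [hn]
    exact le_trans (coord_le_norm (h ε) 1) h1
  have hhxy : h = x + y := by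
    funext ε
    exact decomp (h ε)
  have hsc0 := hD.2.2.2 (fun ε => h ε 0)
    (fun _ => EuclideanSpace.single (0 : Fin 2) (1:ℝ)) hαmod hE0mod
  have hsc1 := hD.2.2.2 (fun ε => h ε 1)
    (fun _ => EuclideanSpace.single (1 : Fin 2) (1:ℝ)) hβmod hE1mod
  have hDx : NglV2 ρ (D x) := by
    apply nglV2_close (v := fun ε => h ε 0 •
      D (fun _ => EuclideanSpace.single (0 : Fin 2) (1:ℝ)) ε)
    · exact hsc0
    · exact nglV2_smul_mod hρ hαmod hn0
  have hDy : NglV2 ρ (D y) := by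
    apply nglV2_close (v := fun ε => h ε 1 •
      D (fun _ => EuclideanSpace.single (1 : Fin 2) (1:ℝ)) ε)
    · exact hsc1
    · exact nglV2_smul_mod hρ hβmod hn1
  have hadd : NglV2 ρ (D h - (D x + D y)) := by
    rw [hhxy]
    exact hD.2.2.1 x y hxmod hymod
  have hDh : NglV2 ρ (D h) := nglV2_close hadd (nglV2_add hDx hDy)
  show NglV2 ρ (D h - 0)
  rwa [sub_zero]
lemma modV2_sub (hρ : Gauge ρ) {x y : ℝ → V2} (hx : ModV2 ρ x) (hy : ModV2 ρ y) :
    ModV2 ρ (x - y) := by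
  obtain ⟨N₁, C₁, hb1⟩ := hx
  obtain ⟨N₂, C₂, hb2⟩ := hy
  refine ⟨max N₁ N₂, max C₁ 0 + max C₂ 0, ?_⟩
  filter_upwards [hb1, hb2, gauge_mem hρ] with ε h1 h2 ⟨hp, hl1⟩
  have hi : (1:ℝ) ≤ (ρ ε)⁻¹ := by rw [le_inv_comm₀ one_pos hp]; simpa using hl1
  have e1 : (ρ ε)⁻¹ ^ N₁ ≤ (ρ ε)⁻¹ ^ (max N₁ N₂) := pow_le_pow_right₀ hi (le_max_left _ _)
  have e2 : (ρ ε)⁻¹ ^ N₂ ≤ (ρ ε)⁻¹ ^ (max N₁ N₂) := pow_le_pow_right₀ hi (le_max_right _ _)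
  have b1 : C₁ * (ρ ε)⁻¹ ^ N₁ ≤ max C₁ 0 * (ρ ε)⁻¹ ^ (max N₁ N₂) := by
    calc C₁ * (ρ ε)⁻¹ ^ N₁ ≤ max C₁ 0 * (ρ ε)⁻¹ ^ N₁ :=
          mul_le_mul_of_nonneg_right (le_max_left _ _) (by positivity)
      _ ≤ max C₁ 0 * (ρ ε)⁻¹ ^ (max N₁ N₂) :=
          mul_le_mul_of_nonneg_left e1 (le_max_right C₁ 0)
  have b2 : C₂ * (ρ ε)⁻¹ ^ N₂ ≤ max C₂ 0 * (ρ ε)⁻¹ ^ (max N₁ N₂) := by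
    calc C₂ * (ρ ε)⁻¹ ^ N₂ ≤ max C₂ 0 * (ρ ε)⁻¹ ^ N₂ :=
          mul_le_mul_of_nonneg_right (le_max_left _ _) (by positivity)
      _ ≤ max C₂ 0 * (ρ ε)⁻¹ ^ (max N₁ N₂) :=
          mul_le_mul_of_nonneg_left e2 (le_max_right C₂ 0)
  calc ‖(x - y) ε‖ ≤ ‖x ε‖ + ‖y ε‖ := norm_sub_le _ _
    _ ≤ C₁ * (ρ ε)⁻¹ ^ N₁ + C₂ * (ρ ε)⁻¹ ^ N₂ := add_le_add h1 h2
    _ ≤ max C₁ 0 * (ρ ε)⁻¹ ^ (max N₁ N₂) + max C₂ 0 * (ρ ε)⁻¹ ^ (max N₁ N₂) :=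
        add_le_add b1 b2
    _ = (max C₁ 0 + max C₂ 0) * (ρ ε)⁻¹ ^ (max N₁ N₂) := by ring
lemma isLinearNet_sub (hρ : Gauge ρ) {D₁ D₂ : (ℝ → V2) → ℝ → V2}
    (h₁ : IsLinearNet ρ D₁) (h₂ : IsLinearNet ρ D₂) :
    IsLinearNet ρ (fun h => D₁ h - D₂ h) := by
  refine ⟨?_, ?_, ?_, ?_⟩
  · intro x y hx hy hxy
    have a1 := h₁.1 x y hx hy hxy
    have a2 := h₂.1 x y hx hy hxy
    show NglV2 ρ ((D₁ x - D₂ x) - (D₁ y - D₂ y))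
    have heq : (D₁ x - D₂ x) - (D₁ y - D₂ y) = (D₁ x - D₁ y) - (D₂ x - D₂ y) := by abel
    rw [heq]; exact nglV2_sub a1 a2
  · intro x hx
    exact modV2_sub hρ (h₁.2.1 x hx) (h₂.2.1 x hx)
  · intro x y hx hy
    have a1 := h₁.2.2.1 x y hx hy
    have a2 := h₂.2.2.1 x y hx hy
    show NglV2 ρ ((D₁ (x+y) - D₂ (x+y)) - ((D₁ x - D₂ x) + (D₁ y - D₂ y)))
    have heq : (D₁ (x+y) - D₂ (x+y)) - ((D₁ x - D₂ x) + (D₁ y - D₂ y))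
        = (D₁ (x+y) - (D₁ x + D₁ y)) - (D₂ (x+y) - (D₂ x + D₂ y)) := by abel
    rw [heq]; exact nglV2_sub a1 a2
  · intro α x hα hx
    have a1 := h₁.2.2.2 α x hα hx
    have a2 := h₂.2.2.2 α x hα hx
    show NglV2 ρ ((D₁ (fun ε => α ε • x ε) - D₂ (fun ε => α ε • x ε))
      - fun ε => α ε • (D₁ x - D₂ x) ε)
    have heq : (fun ε => α ε • (D₁ x - D₂ x) ε)
        = (fun ε => α ε • D₁ x ε) - (fun ε => α ε • D₂ x ε) := by
      funext ε; simp [Pi.sub_apply, smul_sub]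
    rw [heq]
    have heq2 : (D₁ (fun ε => α ε • x ε) - D₂ (fun ε => α ε • x ε))
        - ((fun ε => α ε • D₁ x ε) - (fun ε => α ε • D₂ x ε))
        = (D₁ (fun ε => α ε • x ε) - fun ε => α ε • D₁ x ε)
          - (D₂ (fun ε => α ε • x ε) - fun ε => α ε • D₂ x ε) := by abel
    rw [heq2]; exact nglV2_sub a1 a2

end Helpers

/-- The only linear map `ℝ̃_ρ² → ℝ̃_ρ²` which is a weak little-oh of `h` is the zero map;
consequently differentials are unique. -/
theorem linear_littleOh_is_zero (ρ : ℝ → ℝ) (hρ : Gauge ρ) :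
    (∀ D, IsLinearNet ρ D → IsWeakOhNet ρ D →
      ∀ h, ModV2 ρ h → EqvV2 ρ (D h) 0) ∧
    (∀ D₁ D₂, IsLinearNet ρ D₁ → IsLinearNet ρ D₂ →
      IsWeakOhNet ρ (fun h => D₁ h - D₂ h) →
      ∀ h, ModV2 ρ h → EqvV2 ρ (D₁ h) (D₂ h)) := by
  constructor
  · exact fun D hD hOh => D_zero hρ D hD hOh
  · intro D₁ D₂ h₁ h₂ hOh h hh
    have h0 : NglV2 ρ ((D₁ h - D₂ h) - 0) :=
      D_zero hρ _ (isLinearNet_sub hρ h₁ h₂) hOh h hh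
    show NglV2 ρ (D₁ h - D₂ h)
    rwa [sub_zero] at h0

end RC
end
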